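/- Let G = C₂ × C₂ be the Klein four-group. The ℤ-module of all Brauer relations in G is generated by Θ = 1 − C₂^a − C₂^b − C₂^c + 2·G, where C₂^a, C₂^b, C₂^c are the three subgroups of order 2. That is, if n assigns an integer n_H to each of the five subgroups H of G and for every g ∈ G one has ∑_H n_H · #{ xH ∈ G/H : g·xH = xH } = 0, then there exists m ∈ ℤ with n_1 = m, n_{C₂^a} = n_{C₂^b} = n_{C₂^c} = −m, and n_G = 2m. -/
import Mathlib


/-- The number of cosets in `G ⧸ H` fixed by left translation by `g`;
this is the value at `g` of the character of the permutation representation `ℂ[G/H]`. -/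
noncomputable def fixedCosets {G : Type*} [Group G] (g : G) (H : Subgroup G) : ℕ :=
  Nat.card {x : G ⧸ H // g • x = x}

-- order-2 subgroup structure
lemma sub2 {G : Type*} [Group G] (H : Subgroup G) (h : Nat.card H = 2) :
    ∃ a : G, a ≠ 1 ∧ a ∈ H ∧ a * a = 1 ∧ ∀ x ∈ H, x = 1 ∨ x = a := by
  rw [Nat.card_eq_two_iff' (1 : H)] at h
  obtain ⟨a, ha1, ha2⟩ := h
  refine ⟨(a : G), ?_, a.2, ?_, ?_⟩
  · exact fun h => ha1 (Subtype.ext h)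
  · by_cases h2 : (⟨a*a, mul_mem a.2 a.2⟩ : H) = 1
    · exact congrArg Subtype.val h2
    · have := ha2 _ h2
      have : (a : G) * a = a := congrArg Subtype.val this
      have h3 : (a : G) = 1 := mul_right_cancel (b := (a:G)) (by rw [this, one_mul])
      exact absurd (Subtype.ext h3) ha1
  · intro x hx
    by_cases h1 : (⟨x, hx⟩ : H) = 1
    · exact Or.inl (congrArg Subtype.val h1)
    · exact Or.inr (congrArg Subtype.val (ha2 _ (fun h => h1 h)))

lemma fixed_smul {G : Type*} [Group G] (hcomm : ∀ x y : G, x*y = y*x)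
    (g : G) (H : Subgroup G) (x : G ⧸ H) : g • x = x ↔ g ∈ H := by
  induction x using QuotientGroup.induction_on with
  | H x =>
    rw [show g • ((x : G ⧸ H)) = ((g*x : G) : G ⧸ H) from rfl, QuotientGroup.eq]
    have key : (g*x)⁻¹ * x = g⁻¹ := by
      rw [mul_inv_rev, mul_assoc, hcomm g⁻¹ x, ← mul_assoc, inv_mul_cancel, one_mul]
    rw [key, inv_mem_iff]

lemma fixedCosets_of_mem {G : Type*} [Group G] (hcomm : ∀ x y : G, x*y = y*x)
    {g : G} {H : Subgroup G} (hg : g ∈ H) : fixedCosets g H = H.index := by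
  unfold fixedCosets
  rw [Nat.card_congr (Equiv.subtypeUnivEquiv (fun x => (fixed_smul hcomm g H x).mpr hg))]
  rfl

lemma fixedCosets_of_notMem {G : Type*} [Group G] (hcomm : ∀ x y : G, x*y = y*x)
    {g : G} {H : Subgroup G} (hg : g ∉ H) : fixedCosets g H = 0 := by
  haveI : IsEmpty {x : G ⧸ H // g • x = x} :=
    ⟨fun ⟨x, hx⟩ => hg ((fixed_smul hcomm g H x).mp hx)⟩
  exact Nat.card_of_isEmpty

/-- Let `G` be the Klein four-group (a group of order 4 with three distinct
subgroups `A`, `B`, `C` of order 2, which together with `⊥` and `⊤` are its five subgroups).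
Every Brauer relation in `G` is an integer multiple of `Θ = 1 − A − B − C + 2·G`:
if `n` assigns an integer to each subgroup and the permutation characters cancel,
then there is `m ∈ ℤ` with `n ⊥ = m`, `n A = n B = n C = −m`, `n ⊤ = 2m`. -/
theorem klein_brauer_relations_generated {G : Type*} [Group G] [Finite G]
    (hG : Nat.card G = 4)
    (A B C : Subgroup G) (hA : Nat.card A = 2) (hB : Nat.card B = 2) (hC : Nat.card C = 2)
    (hAB : A ≠ B) (hAC : A ≠ C) (hBC : B ≠ C)
    (n : Subgroup G → ℤ)
    (hrel : ∀ g : G, ∑ᶠ H : Subgroup G, n H * (fixedCosets g H : ℤ) = 0) :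
    ∃ m : ℤ, n ⊥ = m ∧ n A = -m ∧ n B = -m ∧ n C = -m ∧ n ⊤ = 2 * m := by
  classical
  obtain ⟨a, ha1, haA, ha2, haMem⟩ := sub2 A hA
  obtain ⟨b, hb1, hbB, hb2, hbMem⟩ := sub2 B hB
  obtain ⟨c, hc1, hcC, hc2, hcMem⟩ := sub2 C hC
  -- a subgroup of order two with given data equals another if nonidentity elts agree
  have ext2 : ∀ (H K : Subgroup G) (x y : G), x ∈ H → (∀ z ∈ H, z = 1 ∨ z = x) →
      y ∈ K → (∀ z ∈ K, z = 1 ∨ z = y) → x = y → H = K := by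
    intro H K x y hx hxm hy hym hxy
    subst hxy
    ext z
    constructor
    · intro hz; rcases hxm z hz with h | h <;> [exact h ▸ K.one_mem; exact h ▸ hy]
    · intro hz; rcases hym z hz with h | h <;> [exact h ▸ H.one_mem; exact h ▸ hx]
  have hab : a ≠ b := fun h => hAB (ext2 A B a b haA haMem hbB hbMem h)
  have hac : a ≠ c := fun h => hAC (ext2 A C a c haA haMem hcC hcMem h)
  have hbc : b ≠ c := fun h => hBC (ext2 B C b c hbB hbMem hcC hcMem h)
  -- G = {1, a, b, c}
  haveI : Fintype G := Fintype.ofFinite G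
  have huniv : (Finset.univ : Finset G) = {1, a, b, c} := by
    symm
    apply Finset.eq_univ_of_card
    rw [← Nat.card_eq_fintype_card, hG]
    rw [Finset.card_insert_of_notMem (by simp [ha1.symm, hb1.symm, hc1.symm]),
      Finset.card_insert_of_notMem (by simp [hab, hac]),
      Finset.card_insert_of_notMem (by simp [hbc])]
    rfl
  have sq : ∀ g : G, g * g = 1 := by
    intro g
    have : g ∈ (Finset.univ : Finset G) := Finset.mem_univ g
    rw [huniv] at this
    simp only [Finset.mem_insert, Finset.mem_singleton] at this
    rcases this with h | h | h | h <;> subst h <;> simp [ha2, hb2, hc2]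
  have inv_eq : ∀ z : G, z⁻¹ = z := fun z => inv_eq_of_mul_eq_one_right (sq z)
  have hcomm : ∀ x y : G, x * y = y * x := by
    intro x y
    rw [← inv_eq (y*x), mul_inv_rev, inv_eq, inv_eq]
  -- classification of subgroups
  have classify : ∀ H : Subgroup G, H = ⊥ ∨ H = A ∨ H = B ∨ H = C ∨ H = ⊤ := by
    intro H
    have hdvd : Nat.card H ∣ 4 := hG ▸ Subgroup.card_subgroup_dvd_card H
    have hpos : 0 < Nat.card H := Nat.card_pos
    have hle : Nat.card H ≤ 4 := Nat.le_of_dvd (by norm_num) hdvd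
    interval_cases h : Nat.card H
    · exact Or.inl (Subgroup.card_eq_one.mp h)
    · obtain ⟨d, hd1, hdH, hd2, hdMem⟩ := sub2 H h
      have : d ∈ (Finset.univ : Finset G) := Finset.mem_univ d
      rw [huniv] at this
      simp only [Finset.mem_insert, Finset.mem_singleton] at this
      rcases this with h' | h' | h' | h'
      · exact absurd h' hd1
      · exact Or.inr (Or.inl (ext2 H A d a hdH hdMem haA haMem h'))
      · exact Or.inr (Or.inr (Or.inl (ext2 H B d b hdH hdMem hbB hbMem h')))
      · exact Or.inr (Or.inr (Or.inr (Or.inl (ext2 H C d c hdH hdMem hcC hcMem h'))))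
    · norm_num at hdvd
    · exact Or.inr (Or.inr (Or.inr (Or.inr (Subgroup.eq_top_of_card_eq H (h.trans hG.symm)))))
  -- distinctness of the five subgroups
  have cardBot : Nat.card ((⊥ : Subgroup G) : Type _) = 1 := Subgroup.card_bot
  have cardTop : Nat.card ((⊤ : Subgroup G) : Type _) = 4 := by
    rw [Subgroup.card_top]; exact hG
  have hbotA : (⊥ : Subgroup G) ≠ A := fun h => by rw [← h, cardBot] at hA; omega
  have hbotB : (⊥ : Subgroup G) ≠ B := fun h => by rw [← h, cardBot] at hB; omega
  have hbotC : (⊥ : Subgroup G) ≠ C := fun h => by rw [← h, cardBot] at hC; omega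
  have hbotT : (⊥ : Subgroup G) ≠ ⊤ := fun h => by rw [← h, cardBot] at cardTop; omega
  have hAT : A ≠ ⊤ := fun h => by rw [h, cardTop] at hA; omega
  have hBT : B ≠ ⊤ := fun h => by rw [h, cardTop] at hB; omega
  have hCT : C ≠ ⊤ := fun h => by rw [h, cardTop] at hC; omega
  haveI : Fintype (Subgroup G) := Fintype.ofFinite _
  have hunivS : (Finset.univ : Finset (Subgroup G)) = {⊥, A, B, C, ⊤} := by
    symm
    apply Finset.eq_univ_of_forall
    intro H
    simp only [Finset.mem_insert, Finset.mem_singleton]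
    exact classify H
  have expand : ∀ g : G, n ⊥ * (fixedCosets g ⊥ : ℤ) + n A * (fixedCosets g A : ℤ)
      + n B * (fixedCosets g B : ℤ) + n C * (fixedCosets g C : ℤ)
      + n ⊤ * (fixedCosets g ⊤ : ℤ) = 0 := by
    intro g
    have h0 := hrel g
    rw [finsum_eq_sum_of_fintype, hunivS, Finset.sum_insert (by simp [hbotA, hbotB, hbotC, hbotT]),
      Finset.sum_insert (by simp [hAB, hAC, hAT]), Finset.sum_insert (by simp [hBC, hBT]),
      Finset.sum_insert (by simp [hCT]), Finset.sum_singleton] at h0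
    linarith
  -- index values
  have ibot : (⊥ : Subgroup G).index = 4 := by rw [Subgroup.index_bot, hG]
  have itop : (⊤ : Subgroup G).index = 1 := Subgroup.index_top
  have idx2 : ∀ H : Subgroup G, Nat.card H = 2 → H.index = 2 := by
    intro H h
    have := Subgroup.card_mul_index H
    rw [h, hG] at this
    omega
  -- membership facts
  have notbot : ∀ x : G, x ≠ 1 → x ∉ (⊥ : Subgroup G) := fun x hx h => hx (Subgroup.mem_bot.mp h)
  have mem2 : ∀ (H : Subgroup G) (x y : G), (∀ z ∈ H, z = 1 ∨ z = x) → y ≠ 1 → y ≠ x → y ∉ H := by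
    intro H x y hm h1 h2 hy
    rcases hm y hy with h | h
    · exact h1 h
    · exact h2 h
  have e1 : n ⊥ * 4 + n A * 2 + n B * 2 + n C * 2 + n ⊤ * 1 = 0 := by
    have h0 := expand 1
    rw [fixedCosets_of_mem hcomm (Subgroup.one_mem _), fixedCosets_of_mem hcomm (Subgroup.one_mem _),
      fixedCosets_of_mem hcomm (Subgroup.one_mem _), fixedCosets_of_mem hcomm (Subgroup.one_mem _),
      fixedCosets_of_mem hcomm (Subgroup.one_mem _), ibot, itop, idx2 A hA, idx2 B hB, idx2 C hC] at h0
    exact_mod_cast h0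
  have e2 : n A * 2 + n ⊤ * 1 = 0 := by
    have h0 := expand a
    rw [fixedCosets_of_notMem hcomm (notbot a ha1), fixedCosets_of_mem hcomm haA,
      fixedCosets_of_notMem hcomm (mem2 B b a hbMem ha1 hab),
      fixedCosets_of_notMem hcomm (mem2 C c a hcMem ha1 hac),
      fixedCosets_of_mem hcomm (Subgroup.mem_top a), itop, idx2 A hA] at h0
    push_cast at h0
    linarith
  have e3 : n B * 2 + n ⊤ * 1 = 0 := by
    have h0 := expand b
    rw [fixedCosets_of_notMem hcomm (notbot b hb1), fixedCosets_of_mem hcomm hbB,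
      fixedCosets_of_notMem hcomm (mem2 A a b haMem hb1 (Ne.symm hab)),
      fixedCosets_of_notMem hcomm (mem2 C c b hcMem hb1 hbc),
      fixedCosets_of_mem hcomm (Subgroup.mem_top b), itop, idx2 B hB] at h0
    push_cast at h0
    linarith
  have e4 : n C * 2 + n ⊤ * 1 = 0 := by
    have h0 := expand c
    rw [fixedCosets_of_notMem hcomm (notbot c hc1), fixedCosets_of_mem hcomm hcC,
      fixedCosets_of_notMem hcomm (mem2 A a c haMem hc1 (Ne.symm hac)),
      fixedCosets_of_notMem hcomm (mem2 B b c hbMem hc1 (Ne.symm hbc)),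
      fixedCosets_of_mem hcomm (Subgroup.mem_top c), itop, idx2 C hC] at h0
    push_cast at h0
    linarith
  exact ⟨n ⊥, rfl, by omega, by omega, by omega, by omega⟩
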